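/- The membership component of the interval valued q-rung orthopair fuzzy Hamacher–Heronian aggregation operator is monotone in each input: for real parameters φ > 0 and x, y ≥ 0 not both zero, every natural number n ≥ 1, and the composite function M(m_1,…,m_n) = f_{φ,1/(x+y)}( T-fold over all pairs 1 ≤ i ≤ j ≤ n of g_{φ,2/(n(n+1))}( S_φ( f_{φ,x}(m_i), f_{φ,y}(m_j) ) ) ) — where the T-fold denotes combining the n(n+1)/2 terms successively with the Hamacher product T_φ, and where f_{φ,0} and g_{φ,0} with zero exponent in case x = 0 or y = 0 are interpreted as the constant functions 0 and 1 respectively — if m_k, m'_k ∈ [0,1] for all k and m_k ≤ m'_k for all k, then M(m_1,…,m_n) ≤ M(m'_1,…,m'_n). -/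
import Mathlib

/-- Hamacher sum (Hamacher t-conorm) with parameter `φ`. -/
noncomputable def hamacherSum (φ a b : ℝ) : ℝ :=
  (a + b - a * b - (1 - φ) * a * b) / (1 - (1 - φ) * a * b)

/-- Hamacher product (Hamacher t-norm) with parameter `φ`. -/
noncomputable def hamacherProd (φ a b : ℝ) : ℝ :=
  a * b / (φ + (1 - φ) * (a + b - a * b))

/-- Hamacher scalar-multiplication membership function `f_{φ,ϑ}`.  Note that for
zero exponent `ϑ = 0` it is the constant function `0` (since `t ^ (0:ℝ) = 1`). -/
noncomputable def hamacherScalarMem (φ ϑ x : ℝ) : ℝ :=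
  ((1 + (φ - 1) * x) ^ ϑ - (1 - x) ^ ϑ) /
    ((1 + (φ - 1) * x) ^ ϑ + (φ - 1) * (1 - x) ^ ϑ)

/-- Hamacher power membership function `g_{φ,ϑ}`.  Note that for zero exponent
`ϑ = 0` it is the constant function `1` (since `t ^ (0:ℝ) = 1`). -/
noncomputable def hamacherPowerMem (φ ϑ y : ℝ) : ℝ :=
  φ * y ^ ϑ / ((1 + (φ - 1) * (1 - y)) ^ ϑ + (φ - 1) * y ^ ϑ)

/-- The list of all pairs `(i, j)` with `i ≤ j` of indices in `Fin n`. -/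
def ivqPairs (n : ℕ) : List (Fin n × Fin n) :=
  (List.finRange n).flatMap fun i =>
    ((List.finRange n).filter fun j => decide (i ≤ j)).map fun j => (i, j)

/-- The membership component of the IVq-ROF Hamacher–Heronian mean operator:
`M(m₁,…,mₙ) = f_{φ,1/(x+y)}` applied to the `T_φ`-fold, over all pairs
`1 ≤ i ≤ j ≤ n`, of `g_{φ,2/(n(n+1))}(S_φ(f_{φ,x}(mᵢ), f_{φ,y}(mⱼ)))`, where the
successive combination by the Hamacher product `T_φ` starts from its identity `1`. -/
noncomputable def ivqHeronianMem (φ x y : ℝ) (n : ℕ) (m : Fin n → ℝ) : ℝ :=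
  hamacherScalarMem φ (1 / (x + y))
    ((ivqPairs n).foldr
      (fun p acc =>
        hamacherProd φ
          (hamacherPowerMem φ (2 / ((n : ℝ) * ((n : ℝ) + 1)))
            (hamacherSum φ (hamacherScalarMem φ x (m p.1))
              (hamacherScalarMem φ y (m p.2))))
          acc)
      1)

open Real Set

/-! ### Auxiliary lemmas -/

lemma hh_denom_pos {φ p q : ℝ} (hφ : 0 < φ) (hp : 0 < p) (hq : 0 ≤ q) (hqp : q ≤ p) :
    0 < p + (φ - 1) * q := by
  rcases hq.lt_or_eq with h | h
  · nlinarith [mul_pos hφ h]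
  · rw [← h]; simpa using hp

lemma hh_base_pos {φ t : ℝ} (hφ : 0 < φ) (h0 : 0 ≤ t) (h1 : t ≤ 1) :
    0 < 1 + (φ - 1) * t := by
  rcases h1.lt_or_eq with h | h
  · nlinarith [mul_nonneg hφ.le h0]
  · rw [h]; nlinarith

/-! `f = hamacherScalarMem` -/

lemma hamacherScalarMem_mem_Icc {φ ϑ t : ℝ} (hφ : 0 < φ) (hϑ : 0 ≤ ϑ)
    (h0 : 0 ≤ t) (h1 : t ≤ 1) : hamacherScalarMem φ ϑ t ∈ Set.Icc (0:ℝ) 1 := by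
  unfold hamacherScalarMem
  have hA : 0 < 1 + (φ - 1) * t := hh_base_pos hφ h0 h1
  have hB : (0:ℝ) ≤ 1 - t := by linarith
  have hBA : 1 - t ≤ 1 + (φ - 1) * t := by nlinarith [mul_nonneg hφ.le h0]
  have hpp : 0 < (1 + (φ - 1) * t) ^ ϑ := rpow_pos_of_pos hA _
  have hqq : 0 ≤ (1 - t) ^ ϑ := rpow_nonneg hB _
  have hle : (1 - t) ^ ϑ ≤ (1 + (φ - 1) * t) ^ ϑ := rpow_le_rpow hB hBA hϑ
  have hD := hh_denom_pos hφ hpp hqq hle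
  constructor
  · exact div_nonneg (by linarith) hD.le
  · rw [div_le_one hD]; nlinarith [mul_nonneg hφ.le hqq]

lemma hamacherScalarMem_mono {φ ϑ t₁ t₂ : ℝ} (hφ : 0 < φ) (hϑ : 0 ≤ ϑ)
    (h0 : 0 ≤ t₁) (h1 : t₂ ≤ 1) (hle : t₁ ≤ t₂) :
    hamacherScalarMem φ ϑ t₁ ≤ hamacherScalarMem φ ϑ t₂ := by
  unfold hamacherScalarMem
  have h0' : 0 ≤ t₂ := le_trans h0 hle
  have h1' : t₁ ≤ 1 := le_trans hle h1
  have hA₁ : 0 < 1 + (φ - 1) * t₁ := hh_base_pos hφ h0 h1'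
  have hA₂ : 0 < 1 + (φ - 1) * t₂ := hh_base_pos hφ h0' h1
  have hB₁ : (0:ℝ) ≤ 1 - t₁ := by linarith
  have hB₂ : (0:ℝ) ≤ 1 - t₂ := by linarith
  have hBA₁ : 1 - t₁ ≤ 1 + (φ - 1) * t₁ := by nlinarith [mul_nonneg hφ.le h0]
  have hBA₂ : 1 - t₂ ≤ 1 + (φ - 1) * t₂ := by nlinarith [mul_nonneg hφ.le h0']
  have hp₁ : 0 < (1 + (φ - 1) * t₁) ^ ϑ := rpow_pos_of_pos hA₁ _
  have hp₂ : 0 < (1 + (φ - 1) * t₂) ^ ϑ := rpow_pos_of_pos hA₂ _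
  have hq₁ : 0 ≤ (1 - t₁) ^ ϑ := rpow_nonneg hB₁ _
  have hq₂ : 0 ≤ (1 - t₂) ^ ϑ := rpow_nonneg hB₂ _
  have hle₁ : (1 - t₁) ^ ϑ ≤ (1 + (φ - 1) * t₁) ^ ϑ := rpow_le_rpow hB₁ hBA₁ hϑ
  have hle₂ : (1 - t₂) ^ ϑ ≤ (1 + (φ - 1) * t₂) ^ ϑ := rpow_le_rpow hB₂ hBA₂ hϑ
  have hD₁ := hh_denom_pos hφ hp₁ hq₁ hle₁
  have hD₂ := hh_denom_pos hφ hp₂ hq₂ hle₂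
  have key : (1 + (φ - 1) * t₁) * (1 - t₂) ≤ (1 + (φ - 1) * t₂) * (1 - t₁) := by
    nlinarith [mul_nonneg hφ.le (sub_nonneg.2 hle)]
  have keyp : (1 + (φ - 1) * t₁) ^ ϑ * (1 - t₂) ^ ϑ ≤
      (1 + (φ - 1) * t₂) ^ ϑ * (1 - t₁) ^ ϑ := by
    rw [← mul_rpow hA₁.le hB₂, ← mul_rpow hA₂.le hB₁]
    exact rpow_le_rpow (mul_nonneg hA₁.le hB₂) key hϑ
  rw [div_le_div_iff₀ hD₁ hD₂]
  nlinarith [mul_le_mul_of_nonneg_left keyp hφ.le]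

/-! `g = hamacherPowerMem` -/

lemma hamacherPowerMem_mem_Icc {φ ϑ t : ℝ} (hφ : 0 < φ) (hϑ : 0 ≤ ϑ)
    (h0 : 0 ≤ t) (h1 : t ≤ 1) : hamacherPowerMem φ ϑ t ∈ Set.Icc (0:ℝ) 1 := by
  unfold hamacherPowerMem
  have hC : 0 < 1 + (φ - 1) * (1 - t) := hh_base_pos hφ (by linarith) (by linarith)
  have htC : t ≤ 1 + (φ - 1) * (1 - t) := by
    nlinarith [mul_nonneg hφ.le (sub_nonneg.2 h1)]
  have hpp : 0 < (1 + (φ - 1) * (1 - t)) ^ ϑ := rpow_pos_of_pos hC _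
  have hqq : 0 ≤ t ^ ϑ := rpow_nonneg h0 _
  have hleq : t ^ ϑ ≤ (1 + (φ - 1) * (1 - t)) ^ ϑ := rpow_le_rpow h0 htC hϑ
  have hD := hh_denom_pos hφ hpp hqq hleq
  constructor
  · exact div_nonneg (mul_nonneg hφ.le hqq) hD.le
  · rw [div_le_one hD]; nlinarith

lemma hamacherPowerMem_mono {φ ϑ t₁ t₂ : ℝ} (hφ : 0 < φ) (hϑ : 0 ≤ ϑ)
    (h0 : 0 ≤ t₁) (h1 : t₂ ≤ 1) (hle : t₁ ≤ t₂) :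
    hamacherPowerMem φ ϑ t₁ ≤ hamacherPowerMem φ ϑ t₂ := by
  unfold hamacherPowerMem
  have h0' : 0 ≤ t₂ := le_trans h0 hle
  have h1' : t₁ ≤ 1 := le_trans hle h1
  have hC₁ : 0 < 1 + (φ - 1) * (1 - t₁) := hh_base_pos hφ (by linarith) (by linarith)
  have hC₂ : 0 < 1 + (φ - 1) * (1 - t₂) := hh_base_pos hφ (by linarith) (by linarith)
  have htC₁ : t₁ ≤ 1 + (φ - 1) * (1 - t₁) := by
    nlinarith [mul_nonneg hφ.le (sub_nonneg.2 h1')]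
  have htC₂ : t₂ ≤ 1 + (φ - 1) * (1 - t₂) := by
    nlinarith [mul_nonneg hφ.le (sub_nonneg.2 h1)]
  have hp₁ : 0 < (1 + (φ - 1) * (1 - t₁)) ^ ϑ := rpow_pos_of_pos hC₁ _
  have hp₂ : 0 < (1 + (φ - 1) * (1 - t₂)) ^ ϑ := rpow_pos_of_pos hC₂ _
  have hq₁ : 0 ≤ t₁ ^ ϑ := rpow_nonneg h0 _
  have hq₂ : 0 ≤ t₂ ^ ϑ := rpow_nonneg h0' _
  have hleq₁ : t₁ ^ ϑ ≤ (1 + (φ - 1) * (1 - t₁)) ^ ϑ := rpow_le_rpow h0 htC₁ hϑ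
  have hleq₂ : t₂ ^ ϑ ≤ (1 + (φ - 1) * (1 - t₂)) ^ ϑ := rpow_le_rpow h0' htC₂ hϑ
  have hD₁ := hh_denom_pos hφ hp₁ hq₁ hleq₁
  have hD₂ := hh_denom_pos hφ hp₂ hq₂ hleq₂
  have key : t₁ * (1 + (φ - 1) * (1 - t₂)) ≤ t₂ * (1 + (φ - 1) * (1 - t₁)) := by
    nlinarith [mul_nonneg hφ.le (sub_nonneg.2 hle)]
  have keyp : t₁ ^ ϑ * (1 + (φ - 1) * (1 - t₂)) ^ ϑ ≤
      t₂ ^ ϑ * (1 + (φ - 1) * (1 - t₁)) ^ ϑ := by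
    rw [← mul_rpow h0 hC₂.le, ← mul_rpow h0' hC₁.le]
    exact rpow_le_rpow (mul_nonneg h0 hC₂.le) key hϑ
  rw [div_le_div_iff₀ hD₁ hD₂]
  nlinarith [mul_le_mul_of_nonneg_left keyp hφ.le]

/-! `S = hamacherSum` -/

lemma hamacherSum_denom_pos {φ a b : ℝ} (hφ : 0 < φ) (ha : a ∈ Set.Icc (0:ℝ) 1)
    (hb : b ∈ Set.Icc (0:ℝ) 1) : 0 < 1 - (1 - φ) * a * b := by
  obtain ⟨ha0, ha1⟩ := ha; obtain ⟨hb0, hb1⟩ := hb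
  have hab0 : 0 ≤ a * b := mul_nonneg ha0 hb0
  have hab1 : a * b ≤ 1 := by nlinarith
  rcases le_or_gt φ 1 with h | h
  · nlinarith [mul_nonneg (sub_nonneg.2 h) (sub_nonneg.2 hab1)]
  · nlinarith [mul_nonneg (sub_nonneg.2 h.le) hab0]

lemma hamacherSum_mem_Icc {φ a b : ℝ} (hφ : 0 < φ) (ha : a ∈ Set.Icc (0:ℝ) 1)
    (hb : b ∈ Set.Icc (0:ℝ) 1) : hamacherSum φ a b ∈ Set.Icc (0:ℝ) 1 := by
  have hD := hamacherSum_denom_pos hφ ha hb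
  obtain ⟨ha0, ha1⟩ := ha; obtain ⟨hb0, hb1⟩ := hb
  unfold hamacherSum
  constructor
  · apply div_nonneg _ hD.le
    nlinarith [mul_nonneg ha0 (sub_nonneg.2 hb1), mul_nonneg hb0 (sub_nonneg.2 ha1),
      mul_nonneg (mul_nonneg hφ.le ha0) hb0]
  · rw [div_le_one hD]
    nlinarith [mul_nonneg (sub_nonneg.2 ha1) (sub_nonneg.2 hb1)]

lemma hamacherSum_mono_left {φ a₁ a₂ b : ℝ} (hφ : 0 < φ)
    (ha₁ : a₁ ∈ Set.Icc (0:ℝ) 1) (ha₂ : a₂ ∈ Set.Icc (0:ℝ) 1)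
    (hb : b ∈ Set.Icc (0:ℝ) 1) (hlea : a₁ ≤ a₂) :
    hamacherSum φ a₁ b ≤ hamacherSum φ a₂ b := by
  have hD₁ := hamacherSum_denom_pos hφ ha₁ hb
  have hD₂ := hamacherSum_denom_pos hφ ha₂ hb
  obtain ⟨hb0, hb1⟩ := hb
  have haux : (0:ℝ) ≤ 1 - (1 - φ) * b := by nlinarith [mul_nonneg hφ.le hb0]
  unfold hamacherSum
  rw [div_le_div_iff₀ hD₁ hD₂]
  nlinarith [mul_nonneg (mul_nonneg (sub_nonneg.2 hb1) (sub_nonneg.2 hlea)) haux]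

lemma hamacherSum_comm (φ a b : ℝ) : hamacherSum φ a b = hamacherSum φ b a := by
  unfold hamacherSum; ring_nf

lemma hamacherSum_mono {φ a₁ a₂ b₁ b₂ : ℝ} (hφ : 0 < φ)
    (ha₁ : a₁ ∈ Set.Icc (0:ℝ) 1) (ha₂ : a₂ ∈ Set.Icc (0:ℝ) 1)
    (hb₁ : b₁ ∈ Set.Icc (0:ℝ) 1) (hb₂ : b₂ ∈ Set.Icc (0:ℝ) 1)
    (hlea : a₁ ≤ a₂) (hleb : b₁ ≤ b₂) :
    hamacherSum φ a₁ b₁ ≤ hamacherSum φ a₂ b₂ := by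
  refine le_trans (hamacherSum_mono_left hφ ha₁ ha₂ hb₁ hlea) ?_
  rw [hamacherSum_comm φ a₂ b₁, hamacherSum_comm φ a₂ b₂]
  exact hamacherSum_mono_left hφ hb₁ hb₂ ha₂ hleb

/-! `T = hamacherProd` -/

lemma hamacherProd_denom_pos {φ a b : ℝ} (hφ : 0 < φ) (ha : a ∈ Set.Icc (0:ℝ) 1)
    (hb : b ∈ Set.Icc (0:ℝ) 1) : 0 < φ + (1 - φ) * (a + b - a * b) := by
  obtain ⟨ha0, ha1⟩ := ha; obtain ⟨hb0, hb1⟩ := hb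
  have hw0 : 0 ≤ a + b - a * b := by nlinarith [mul_nonneg (sub_nonneg.2 ha1) hb0]
  have hw1 : a + b - a * b ≤ 1 := by
    nlinarith [mul_nonneg (sub_nonneg.2 ha1) (sub_nonneg.2 hb1)]
  rcases le_or_gt φ 1 with h | h
  · nlinarith
  · nlinarith

lemma hamacherProd_mem_Icc {φ a b : ℝ} (hφ : 0 < φ) (ha : a ∈ Set.Icc (0:ℝ) 1)
    (hb : b ∈ Set.Icc (0:ℝ) 1) : hamacherProd φ a b ∈ Set.Icc (0:ℝ) 1 := by
  have hD := hamacherProd_denom_pos hφ ha hb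
  obtain ⟨ha0, ha1⟩ := ha; obtain ⟨hb0, hb1⟩ := hb
  unfold hamacherProd
  constructor
  · exact div_nonneg (mul_nonneg ha0 hb0) hD.le
  · rw [div_le_one hD]
    nlinarith [mul_nonneg (mul_nonneg hφ.le (sub_nonneg.2 ha1)) (sub_nonneg.2 hb1),
      mul_nonneg ha0 (sub_nonneg.2 hb1), mul_nonneg hb0 (sub_nonneg.2 ha1)]

lemma hamacherProd_mono_left {φ a₁ a₂ b : ℝ} (hφ : 0 < φ)
    (ha₁ : a₁ ∈ Set.Icc (0:ℝ) 1) (ha₂ : a₂ ∈ Set.Icc (0:ℝ) 1)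
    (hb : b ∈ Set.Icc (0:ℝ) 1) (hlea : a₁ ≤ a₂) :
    hamacherProd φ a₁ b ≤ hamacherProd φ a₂ b := by
  have hD₁ := hamacherProd_denom_pos hφ ha₁ hb
  have hD₂ := hamacherProd_denom_pos hφ ha₂ hb
  obtain ⟨hb0, hb1⟩ := hb
  have haux : (0:ℝ) ≤ φ + (1 - φ) * b := by nlinarith [mul_nonneg hφ.le (sub_nonneg.2 hb1)]
  unfold hamacherProd
  rw [div_le_div_iff₀ hD₁ hD₂]
  nlinarith [mul_nonneg (mul_nonneg hb0 (sub_nonneg.2 hlea)) haux]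

lemma hamacherProd_comm (φ a b : ℝ) : hamacherProd φ a b = hamacherProd φ b a := by
  unfold hamacherProd; ring_nf

lemma hamacherProd_mono {φ a₁ a₂ b₁ b₂ : ℝ} (hφ : 0 < φ)
    (ha₁ : a₁ ∈ Set.Icc (0:ℝ) 1) (ha₂ : a₂ ∈ Set.Icc (0:ℝ) 1)
    (hb₁ : b₁ ∈ Set.Icc (0:ℝ) 1) (hb₂ : b₂ ∈ Set.Icc (0:ℝ) 1)
    (hlea : a₁ ≤ a₂) (hleb : b₁ ≤ b₂) :
    hamacherProd φ a₁ b₁ ≤ hamacherProd φ a₂ b₂ := by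
  refine le_trans (hamacherProd_mono_left hφ ha₁ ha₂ hb₁ hlea) ?_
  rw [hamacherProd_comm φ a₂ b₁, hamacherProd_comm φ a₂ b₂]
  exact hamacherProd_mono_left hφ hb₁ hb₂ ha₂ hleb

/-! Folds by the Hamacher product -/

lemma hh_foldr_mem_Icc {α : Type*} {φ : ℝ} (hφ : 0 < φ) (t : α → ℝ)
    (ht : ∀ a, t a ∈ Set.Icc (0:ℝ) 1) (L : List α) :
    L.foldr (fun a acc => hamacherProd φ (t a) acc) 1 ∈ Set.Icc (0:ℝ) 1 := by
  induction L with
  | nil => exact ⟨zero_le_one, le_refl 1⟩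
  | cons a L ih => exact hamacherProd_mem_Icc hφ (ht a) ih

lemma hh_foldr_mono {α : Type*} {φ : ℝ} (hφ : 0 < φ) (t t' : α → ℝ)
    (ht : ∀ a, t a ∈ Set.Icc (0:ℝ) 1) (ht' : ∀ a, t' a ∈ Set.Icc (0:ℝ) 1)
    (hle : ∀ a, t a ≤ t' a) (L : List α) :
    L.foldr (fun a acc => hamacherProd φ (t a) acc) 1 ≤
      L.foldr (fun a acc => hamacherProd φ (t' a) acc) 1 := by
  induction L with
  | nil => exact le_refl 1
  | cons a L ih =>
    exact hamacherProd_mono hφ (ht a) (ht' a)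
      (hh_foldr_mem_Icc hφ t ht L) (hh_foldr_mem_Icc hφ t' ht' L) (hle a) ih

theorem ivqHeronianMem_monotone (φ x y : ℝ) (hφ : 0 < φ) (hx : 0 ≤ x) (hy : 0 ≤ y)
    (hxy : ¬(x = 0 ∧ y = 0)) (n : ℕ) (hn : 1 ≤ n) (m m' : Fin n → ℝ)
    (hm : ∀ k, m k ∈ Set.Icc (0:ℝ) 1) (hm' : ∀ k, m' k ∈ Set.Icc (0:ℝ) 1)
    (hle : ∀ k, m k ≤ m' k) :
    ivqHeronianMem φ x y n m ≤ ivqHeronianMem φ x y n m' := by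
  have hϑ2 : (0:ℝ) ≤ 2 / ((n : ℝ) * ((n : ℝ) + 1)) := by positivity
  have hxy' : (0:ℝ) ≤ 1 / (x + y) := by positivity
  set t : Fin n × Fin n → ℝ := fun p =>
    hamacherPowerMem φ (2 / ((n : ℝ) * ((n : ℝ) + 1)))
      (hamacherSum φ (hamacherScalarMem φ x (m p.1))
        (hamacherScalarMem φ y (m p.2))) with ht_def
  set t' : Fin n × Fin n → ℝ := fun p =>
    hamacherPowerMem φ (2 / ((n : ℝ) * ((n : ℝ) + 1)))
      (hamacherSum φ (hamacherScalarMem φ x (m' p.1))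
        (hamacherScalarMem φ y (m' p.2))) with ht'_def
  have hfm : ∀ (ϑ : ℝ), 0 ≤ ϑ → ∀ k, hamacherScalarMem φ ϑ (m k) ∈ Set.Icc (0:ℝ) 1 :=
    fun ϑ hϑ k => hamacherScalarMem_mem_Icc hφ hϑ (hm k).1 (hm k).2
  have hfm' : ∀ (ϑ : ℝ), 0 ≤ ϑ → ∀ k, hamacherScalarMem φ ϑ (m' k) ∈ Set.Icc (0:ℝ) 1 :=
    fun ϑ hϑ k => hamacherScalarMem_mem_Icc hφ hϑ (hm' k).1 (hm' k).2
  have hSm : ∀ p : Fin n × Fin n,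
      hamacherSum φ (hamacherScalarMem φ x (m p.1)) (hamacherScalarMem φ y (m p.2))
        ∈ Set.Icc (0:ℝ) 1 :=
    fun p => hamacherSum_mem_Icc hφ (hfm x hx p.1) (hfm y hy p.2)
  have hSm' : ∀ p : Fin n × Fin n,
      hamacherSum φ (hamacherScalarMem φ x (m' p.1)) (hamacherScalarMem φ y (m' p.2))
        ∈ Set.Icc (0:ℝ) 1 :=
    fun p => hamacherSum_mem_Icc hφ (hfm' x hx p.1) (hfm' y hy p.2)
  have hmemt : ∀ p, t p ∈ Set.Icc (0:ℝ) 1 := fun p =>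
    hamacherPowerMem_mem_Icc hφ hϑ2 (hSm p).1 (hSm p).2
  have hmemt' : ∀ p, t' p ∈ Set.Icc (0:ℝ) 1 := fun p =>
    hamacherPowerMem_mem_Icc hφ hϑ2 (hSm' p).1 (hSm' p).2
  have hlet : ∀ p, t p ≤ t' p := by
    intro p
    apply hamacherPowerMem_mono hφ hϑ2 (hSm p).1 (hSm' p).2
    apply hamacherSum_mono hφ (hfm x hx p.1) (hfm' x hx p.1) (hfm y hy p.2) (hfm' y hy p.2)
    · exact hamacherScalarMem_mono hφ hx (hm p.1).1 (hm' p.1).2 (hle p.1)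
    · exact hamacherScalarMem_mono hφ hy (hm p.2).1 (hm' p.2).2 (hle p.2)
  have hF := hh_foldr_mem_Icc hφ t hmemt (ivqPairs n)
  have hF' := hh_foldr_mem_Icc hφ t' hmemt' (ivqPairs n)
  have hFle := hh_foldr_mono hφ t t' hmemt hmemt' hlet (ivqPairs n)
  unfold ivqHeronianMem
  exact hamacherScalarMem_mono hφ hxy' hF.1 hF'.2 hFle
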